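/- Let d ≥ 2 be an even integer, let Θ be a d-small symbol, and let Θ° be any d/2-cocore of Θ (i.e., a symbol with no d/2-cohooks obtained from Θ by a finite sequence of d/2-cohook removals). Then Θ° is d-small, it admits defining intervals whose middle region has cardinality 0, and for a suitable such choice of defining intervals the up-down diagram w_ud(Θ°) is obtained from w_ud(Θ) by replacing every letter ∧ by ∨ and leaving all letters ∨, ×, ∘ unchanged and in the same positions. -/

import Mathlib

open scoped Classical

/-- A β-set: a set of integers containing all sufficiently small integers
and no sufficiently large ones. -/
def IsBetaSet (X : Set ℤ) : Prop :=
  (∃ c : ℤ, ∀ z : ℤ, z < c → z ∈ X) ∧ (∃ C : ℤ, ∀ z : ℤ, C ≤ z → z ∉ X)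

/-- `topB X = max X`. -/
noncomputable def topB (X : Set ℤ) : ℤ := sSup X

/-- `botB X = max {z | every integer < z lies in X}`. -/
noncomputable def botB (X : Set ℤ) : ℤ := sSup {z : ℤ | ∀ w : ℤ, w < z → w ∈ X}

/-- The charge `s(X)` of a β-set `X`, computed with the cutoff `c = botB X`. -/
noncomputable def chargeB (X : Set ℤ) : ℤ :=
  ((X ∩ Set.Ici (botB X)).ncard : ℤ) + botB X - 1

/-- `elemSeq X j` is the `(j+1)`-st largest element of the β-set `X`. -/
noncomputable def elemSeq (X : Set ℤ) : ℕ → ℤ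
  | 0 => sSup X
  | n + 1 => sSup (X ∩ Set.Iio (elemSeq X n))

/-- The partition `λ(X)` of a β-set `X`, `0`-indexed: `partB X j = λ_{j+1}`,
recovered from `x_j = s(X) + λ_j - j + 1` where `x_j` is the `j`-th largest element. -/
noncomputable def partB (X : Set ℤ) (j : ℕ) : ℕ :=
  (elemSeq X j - chargeB X + j).toNat

/-- The size `|λ(X)|` of the partition of a β-set `X`. -/
noncomputable def sizeB (X : Set ℤ) : ℕ := ∑ᶠ j : ℕ, partB X j

/-- A partition, encoded as a weakly decreasing eventually zero function (0-indexed). -/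
def IsPartition (μ : ℕ → ℕ) : Prop :=
  (∀ j, μ (j + 1) ≤ μ j) ∧ ∃ N, ∀ j, N ≤ j → μ j = 0

/-- The β-set `{s + λ_j - j + 1 : j ≥ 1}` of the partition `μ` with charge `s`. -/
def betaOf (μ : ℕ → ℕ) (s : ℤ) : Set ℤ :=
  {x : ℤ | ∃ j : ℕ, x = s + (μ j : ℤ) - (j : ℤ)}

/-- The symbol `Θ = (X₁, X₂)` is `d`-small with defining intervals
`I₁ = [a₁,b₁]` and `I₂ = [a₂,b₂]`. -/
structure IsDSmallWith (d : ℤ) (X₁ X₂ : Set ℤ) (a₁ b₁ a₂ b₂ : ℤ) : Prop where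
  len₁ : b₁ - a₁ = d / 2 - 1
  len₂ : b₂ - a₂ = d / 2 - 1
  bot₁ : a₁ ≤ botB X₁
  bot₂ : a₂ ≤ botB X₂
  top₁ : topB X₁ ≤ b₁
  top₂ : topB X₂ ≤ b₂
  cong : d ∣ b₂ - (b₁ + d / 2)

/-- The symbol `Θ = (X₁, X₂)` is `d`-small: it admits some pair of defining intervals. -/
def IsDSmall (d : ℤ) (X₁ X₂ : Set ℤ) : Prop :=
  ∃ a₁ b₁ a₂ b₂ : ℤ, IsDSmallWith d X₁ X₂ a₁ b₁ a₂ b₂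

/-- The row (`1` or `2`) containing the right region. -/
def rightRow (b₁ b₂ : ℤ) : ℕ := if b₁ < b₂ then 2 else 1

/-- The row, as a β-set, containing the right region. -/
def rightSet (X₁ X₂ : Set ℤ) (b₁ b₂ : ℤ) : Set ℤ := if b₁ < b₂ then X₂ else X₁

/-- The row, as a β-set, containing the left region. -/
def leftSet (X₁ X₂ : Set ℤ) (b₁ b₂ : ℤ) : Set ℤ := if b₁ < b₂ then X₁ else X₂

/-- The cardinality `kd` of the middle region. -/
def middleLen (d b₁ b₂ : ℤ) : ℤ := |b₂ - b₁| - d / 2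

/-- The alphabet `{∧, ∨, ×, ∘}` of up-down diagrams: `up = ∧`, `dn = ∨`,
`cross = ×`, `circ = ∘`. -/
inductive UD : Type
  | up
  | dn
  | cross
  | circ
deriving DecidableEq

/-- The up-down diagram `w_ud(Θ)` of a `d`-small symbol with defining intervals:
`wud d X₁ X₂ b₁ b₂ i` is the letter `w_i` for `1 ≤ i ≤ d/2`.  Here the right
region is `[m+1, m+d/2]` with `m = max b₁ b₂ - d/2`, `β_i = m + i`, and
`β_i - kd - d/2 = β_i - |b₂ - b₁|`. -/
noncomputable def wud (d : ℤ) (X₁ X₂ : Set ℤ) (b₁ b₂ : ℤ) (i : ℤ) : UD :=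
  if (max b₁ b₂ - d / 2 + i) ∈ rightSet X₁ X₂ b₁ b₂ then
    if (max b₁ b₂ - d / 2 + i) - |b₂ - b₁| ∈ leftSet X₁ X₂ b₁ b₂ then UD.cross else UD.up
  else
    if (max b₁ b₂ - d / 2 + i) - |b₂ - b₁| ∈ leftSet X₁ X₂ b₁ b₂ then UD.dn else UD.circ

/-- Removing an `e`-cohook in row `1` (the rows get interchanged afterwards). -/
def RemoveCohookRow1 (e : ℤ) (Θ Θ' : Set ℤ × Set ℤ) : Prop :=
  ∃ x : ℤ, x ∈ Θ.1 ∧ x - e ∉ Θ.2 ∧ Θ' = (Θ.2 ∪ {x - e}, Θ.1 \ {x})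

/-- Removing an `e`-cohook in row `2` (the rows get interchanged afterwards). -/
def RemoveCohookRow2 (e : ℤ) (Θ Θ' : Set ℤ × Set ℤ) : Prop :=
  ∃ x : ℤ, x ∈ Θ.2 ∧ x - e ∉ Θ.1 ∧ Θ' = (Θ.2 \ {x}, Θ.1 ∪ {x - e})

/-- Removing an `e`-cohook. -/
def RemoveCohook (e : ℤ) (Θ Θ' : Set ℤ × Set ℤ) : Prop :=
  RemoveCohookRow1 e Θ Θ' ∨ RemoveCohookRow2 e Θ Θ'

/-- The symbol `Θ` has an `e`-cohook. -/
def HasCohook (e : ℤ) (Θ : Set ℤ × Set ℤ) : Prop :=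
  (∃ x : ℤ, x ∈ Θ.1 ∧ x - e ∉ Θ.2) ∨ (∃ x : ℤ, x ∈ Θ.2 ∧ x - e ∉ Θ.1)

/-- `C` is an `e`-cocore of `Θ`: a symbol with no `e`-cohooks obtained from `Θ`
by a finite sequence of `e`-cohook removals. -/
def IsCocoreOf (e : ℤ) (Θ C : Set ℤ × Set ℤ) : Prop :=
  Relation.ReflTransGen (RemoveCohook e) Θ C ∧ ¬ HasCohook e C

/-- The `n`-fold composition of a relation. -/
def RelPow {α : Type*} (R : α → α → Prop) : ℕ → α → α → Prop
  | 0 => Eq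
  | n + 1 => fun a c => ∃ b, R a b ∧ RelPow R n b c

/-- `(a, b)` (row `a`, column `b`, both `1`-indexed) is a box of the partition `μ`
(`μ` is `0`-indexed, so `μ (a-1)` is the `a`-th part `λ_a`). -/
def IsBox (μ : ℕ → ℕ) (a b : ℕ) : Prop := 1 ≤ a ∧ 1 ≤ b ∧ b ≤ μ (a - 1)

/-- `(a, b)` is an addable box of `μ`: adjoining it yields a partition. -/
def IsAddableBox (μ : ℕ → ℕ) (a b : ℕ) : Prop :=
  1 ≤ a ∧ b = μ (a - 1) + 1 ∧ (a = 1 ∨ b ≤ μ (a - 2))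

/-- `(a, b)` is a removable box of `μ`: deleting it yields a partition. -/
def IsRemovableBox (μ : ℕ → ℕ) (a b : ℕ) : Prop :=
  1 ≤ a ∧ b = μ (a - 1) ∧ 1 ≤ b ∧ μ a < b

/-- The charged content `t + b - a` of the box in row `a` and column `b`,
with respect to the charge `t`. -/
def chCont (t : ℤ) (a b : ℕ) : ℤ := t + (b : ℤ) - (a : ℤ)

/-- Selecting the component `j ∈ {1, 2}` of a bipartition. -/
def compPart (μ₁ μ₂ : ℕ → ℕ) (j : ℕ) : ℕ → ℕ := if j = 1 then μ₁ else μ₂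

/-- Selecting the component `j ∈ {1, 2}` of a pair of charges. -/
def compT (t₁ t₂ : ℤ) (j : ℕ) : ℤ := if j = 1 then t₁ else t₂

/-- The box `(a, b)` in component `j` is a good removable `i`-box of the
bipartition `(μ₁, μ₂)` with charges `(t₁, t₂)`, where `r` is the row containing
the right region: it is a removable box of charged content `≡ i (mod d)` and
there is no addable box `A` of either component with charged content `≡ i (mod d)`
such that either `A` has strictly larger charged content, or `A` has equal
charged content and lies in component `r`. -/
def IsGoodRemovableBox (d : ℤ) (μ₁ μ₂ : ℕ → ℕ) (t₁ t₂ : ℤ) (r : ℕ) (i : ℤ)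
    (j a b : ℕ) : Prop :=
  (j = 1 ∨ j = 2) ∧ IsRemovableBox (compPart μ₁ μ₂ j) a b ∧
    d ∣ chCont (compT t₁ t₂ j) a b - i ∧
    ∀ j' a' b' : ℕ, (j' = 1 ∨ j' = 2) → IsAddableBox (compPart μ₁ μ₂ j') a' b' →
      d ∣ chCont (compT t₁ t₂ j') a' b' - i →
      ¬ (chCont (compT t₁ t₂ j) a b < chCont (compT t₁ t₂ j') a' b' ∨
        (chCont (compT t₁ t₂ j') a' b' = chCont (compT t₁ t₂ j) a b ∧ j' = r))

/-- The position of a letter in the order `× < ∧ < ∨ < ∘`. -/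
def udIdx : UD → ℕ
  | UD.cross => 0
  | UD.up => 1
  | UD.dn => 2
  | UD.circ => 3

/-- The word `w₁ ⋯ w_{d/2}` reads `×^α ∧^w ∨^h ∘^β`: all `×`'s first, then all
`∧`'s, then all `∨`'s, then all `∘`'s. -/
def SortedUD (d : ℤ) (w : ℤ → UD) : Prop :=
  ∀ i j : ℤ, 1 ≤ i → i ≤ j → j ≤ d / 2 → udIdx (w i) ≤ udIdx (w j)

/-- The number of occurrences of the letter `u` in the word `w₁ ⋯ w_{d/2}`. -/
noncomputable def countUD (d : ℤ) (w : ℤ → UD) (u : UD) : ℕ :=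
  ((Finset.Icc (1 : ℤ) (d / 2)).filter fun i => w i = u).card

/-- `w'` is obtained from `w` by permuting the letters `∧` and `∨` among the
positions carrying `∧` or `∨`, leaving every `×` and `∘` in place. -/
def PermUpDn (d : ℤ) (w w' : ℤ → UD) : Prop :=
  (∀ i : ℤ, 1 ≤ i → i ≤ d / 2 →
    ((w' i = UD.cross ↔ w i = UD.cross) ∧ (w' i = UD.circ ↔ w i = UD.circ))) ∧
  countUD d w' UD.up = countUD d w UD.up

/-- Replace every letter `∧` by `∨`, leaving the other letters unchanged. -/
def replaceUp : UD → UD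
  | UD.up => UD.dn
  | u => u

namespace Stmt0Aux

/-! ### Basic β-set lemmas -/

lemma betaSet_union_singleton {X : Set ℤ} (h : IsBetaSet X) (y : ℤ) :
    IsBetaSet (X ∪ {y}) := by
  obtain ⟨⟨c, hc⟩, ⟨C, hC⟩⟩ := h
  refine ⟨⟨c, fun z hz => Or.inl (hc z hz)⟩, ⟨max C (y + 1), fun z hz hmem => ?_⟩⟩
  rcases hmem with hm | hm
  · exact hC z (le_trans (le_max_left _ _) hz) hm
  · simp only [Set.mem_singleton_iff] at hm
    have := le_trans (le_max_right _ _) hz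
    omega

lemma betaSet_diff_singleton {X : Set ℤ} (h : IsBetaSet X) (y : ℤ) :
    IsBetaSet (X \ {y}) := by
  obtain ⟨⟨c, hc⟩, ⟨C, hC⟩⟩ := h
  refine ⟨⟨min c y, fun z hz => ⟨hc z (by omega), by simp; omega⟩⟩,
    ⟨C, fun z hz hmem => hC z hz hmem.1⟩⟩

/-- A pair of β-sets. -/
def Bpair (Θ : Set ℤ × Set ℤ) : Prop := IsBetaSet Θ.1 ∧ IsBetaSet Θ.2

def swapP (Θ : Set ℤ × Set ℤ) : Set ℤ × Set ℤ := (Θ.2, Θ.1)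

lemma Bpair.swap {Θ : Set ℤ × Set ℤ} (h : Bpair Θ) : Bpair (swapP Θ) := ⟨h.2, h.1⟩

@[simp] lemma swapP_swapP (Θ : Set ℤ × Set ℤ) : swapP (swapP Θ) = Θ := rfl

lemma bpair_step {e : ℤ} {Θ Θ' : Set ℤ × Set ℤ} (h : RemoveCohook e Θ Θ')
    (hβ : Bpair Θ) : Bpair Θ' := by
  rcases h with ⟨x, _, _, rfl⟩ | ⟨x, _, _, rfl⟩
  · exact ⟨betaSet_union_singleton hβ.2 _, betaSet_diff_singleton hβ.1 _⟩
  · exact ⟨betaSet_diff_singleton hβ.2 _, betaSet_union_singleton hβ.1 _⟩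

lemma removeCohook_swap {e : ℤ} {Θ Θ' : Set ℤ × Set ℤ} (h : RemoveCohook e Θ Θ') :
    RemoveCohook e (swapP Θ) (swapP Θ') := by
  rcases h with ⟨x, h1, h2, rfl⟩ | ⟨x, h1, h2, rfl⟩
  · exact Or.inr ⟨x, h1, h2, rfl⟩
  · exact Or.inl ⟨x, h1, h2, rfl⟩

/-! ### The charge machinery -/

/-- Occupancy set of the chain of `v` : spot `t` carries value `v - t*e`,
in row 1 for even `t` and row 2 for odd `t`. -/
def occSet (e : ℤ) (Θ : Set ℤ × Set ℤ) (v : ℤ) : Set ℤ :=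
  {t : ℤ | if Even t then v - t * e ∈ Θ.1 else v - t * e ∈ Θ.2}

/-- The charge of an occupancy set. -/
noncomputable def chOf (U : Set ℤ) : ℤ :=
  ((U ∩ Set.Iio 0).ncard : ℤ) - ((Uᶜ ∩ Set.Ici 0).ncard : ℤ)

/-- Finiteness conditions making `chOf` meaningful. -/
def FinOcc (U : Set ℤ) : Prop := (U ∩ Set.Iio 0).Finite ∧ (Uᶜ ∩ Set.Ici 0).Finite

noncomputable def chg (e : ℤ) (Θ : Set ℤ × Set ℤ) (v : ℤ) : ℤ := chOf (occSet e Θ v)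

lemma finOcc_occSet {e : ℤ} (he : 1 ≤ e) {Θ : Set ℤ × Set ℤ} (hβ : Bpair Θ) (v : ℤ) :
    FinOcc (occSet e Θ v) := by
  obtain ⟨⟨⟨c₁, hc₁⟩, ⟨C₁, hC₁⟩⟩, ⟨⟨c₂, hc₂⟩, ⟨C₂, hC₂⟩⟩⟩ := hβ
  constructor
  · apply Set.Finite.subset (Set.finite_Ico (v - max C₁ C₂) 0)
    rintro t ⟨ht, ht0⟩
    simp only [Set.mem_Iio] at ht0
    simp only [occSet, Set.mem_setOf_eq] at ht
    have hval : v - t * e < max C₁ C₂ := by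
      by_contra hcon
      push_neg at hcon
      split_ifs at ht with hev
      · exact hC₁ _ (le_trans (le_max_left _ _) hcon) ht
      · exact hC₂ _ (le_trans (le_max_right _ _) hcon) ht
    have : t * e ≤ t := by nlinarith
    exact ⟨by linarith, ht0⟩
  · apply Set.Finite.subset (Set.finite_Icc 0 (v - min c₁ c₂ + 1))
    rintro t ⟨ht, ht0⟩
    simp only [Set.mem_Ici] at ht0
    simp only [occSet, Set.mem_setOf_eq, Set.mem_compl_iff] at ht
    have hval : ¬ (v - t * e < min c₁ c₂) := by
      intro hcon
      split_ifs at ht with hev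
      · exact ht (hc₁ _ (lt_of_lt_of_le hcon (min_le_left _ _)))
      · exact ht (hc₂ _ (lt_of_lt_of_le hcon (min_le_right _ _)))
    push_neg at hval
    have : t ≤ t * e := by nlinarith
    exact ⟨ht0, by linarith⟩

lemma FinOcc.congr {U V : Set ℤ} (h : FinOcc U) (hUV : U = V) : FinOcc V := hUV ▸ h

/-- Inserting a new element increases the charge by 1. -/
lemma chOf_insert {U : Set ℤ} (hU : FinOcc U) {a : ℤ} (ha : a ∉ U) :
    chOf (insert a U) = chOf U + 1 := by
  rcases lt_or_ge a 0 with h | h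
  · have h1 : insert a U ∩ Set.Iio 0 = insert a (U ∩ Set.Iio 0) := by
      ext t; simp only [Set.mem_inter_iff, Set.mem_insert_iff, Set.mem_Iio]
      constructor
      · rintro ⟨(rfl | ht), ht0⟩
        · exact Or.inl rfl
        · exact Or.inr ⟨ht, ht0⟩
      · rintro (rfl | ⟨ht, ht0⟩)
        · exact ⟨Or.inl rfl, h⟩
        · exact ⟨Or.inr ht, ht0⟩
    have h2 : (insert a U)ᶜ ∩ Set.Ici 0 = Uᶜ ∩ Set.Ici 0 := by
      ext t; simp only [Set.mem_inter_iff, Set.mem_compl_iff, Set.mem_insert_iff, Set.mem_Ici]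
      constructor
      · rintro ⟨ht, ht0⟩; exact ⟨fun hc => ht (Or.inr hc), ht0⟩
      · rintro ⟨ht, ht0⟩
        refine ⟨fun hc => ?_, ht0⟩
        rcases hc with rfl | hc
        · omega
        · exact ht hc
    have hfin : (U ∩ Set.Iio 0).Finite := hU.1
    have hnm : a ∉ U ∩ Set.Iio 0 := fun hc => ha hc.1
    rw [chOf, chOf, h1, h2, Set.ncard_insert_of_notMem hnm hfin]
    push_cast
    ring
  · have h1 : insert a U ∩ Set.Iio 0 = U ∩ Set.Iio 0 := by
      ext t; simp only [Set.mem_inter_iff, Set.mem_insert_iff, Set.mem_Iio]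
      constructor
      · rintro ⟨(rfl | ht), ht0⟩
        · omega
        · exact ⟨ht, ht0⟩
      · rintro ⟨ht, ht0⟩; exact ⟨Or.inr ht, ht0⟩
    have h2 : Uᶜ ∩ Set.Ici 0 = insert a ((insert a U)ᶜ ∩ Set.Ici 0) := by
      ext t; simp only [Set.mem_inter_iff, Set.mem_compl_iff, Set.mem_insert_iff, Set.mem_Ici]
      constructor
      · rintro ⟨ht, ht0⟩
        by_cases hta : t = a
        · exact Or.inl hta
        · exact Or.inr ⟨fun hc => by rcases hc with rfl | hc; exact hta rfl; exact ht hc, ht0⟩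
      · rintro (rfl | ⟨ht, ht0⟩)
        · exact ⟨ha, h⟩
        · exact ⟨fun hc => ht (Or.inr hc), ht0⟩
    have hfin2 : ((insert a U)ᶜ ∩ Set.Ici 0).Finite :=
      hU.2.subset (by intro t ht; exact ⟨fun hc => ht.1 (Or.inr hc), ht.2⟩)
    have hnm : a ∉ (insert a U)ᶜ ∩ Set.Ici 0 := fun hc => hc.1 (Or.inl rfl)
    rw [chOf, chOf, h1, h2, Set.ncard_insert_of_notMem hnm hfin2]
    push_cast
    ring

lemma FinOcc.insert {U : Set ℤ} (hU : FinOcc U) (a : ℤ) : FinOcc (insert a U) := by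
  constructor
  · exact (hU.1.union (Set.finite_singleton a)).subset (by
      rintro t ⟨(rfl | ht), ht0⟩
      · exact Or.inr rfl
      · exact Or.inl ⟨ht, ht0⟩)
  · exact hU.2.subset (by rintro t ⟨ht, ht0⟩; exact ⟨fun hc => ht (Or.inr hc), ht0⟩)

lemma FinOcc.diff {U : Set ℤ} (hU : FinOcc U) (a : ℤ) : FinOcc (U \ {a}) := by
  constructor
  · exact hU.1.subset (by rintro t ⟨⟨ht, _⟩, ht0⟩; exact ⟨ht, ht0⟩)
  · exact (hU.2.union (Set.finite_singleton a)).subset (by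
      rintro t ⟨ht, ht0⟩
      by_cases hta : t = a
      · exact Or.inr hta
      · exact Or.inl ⟨fun hc => ht ⟨hc, hta⟩, ht0⟩)

lemma chOf_diff {U : Set ℤ} (hU : FinOcc U) {a : ℤ} (ha : a ∈ U) :
    chOf (U \ {a}) = chOf U - 1 := by
  have h1 : U = insert a (U \ {a}) := by
    ext t; simp only [Set.mem_insert_iff, Set.mem_diff, Set.mem_singleton_iff]
    constructor
    · intro ht; by_cases hta : t = a
      · exact Or.inl hta
      · exact Or.inr ⟨ht, hta⟩
    · rintro (rfl | ⟨ht, _⟩) <;> [exact ha; exact ht]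
  have h2 : a ∉ U \ {a} := fun hc => hc.2 rfl
  have := chOf_insert (hU.diff a) h2
  rw [← h1] at this
  omega

/-- Moving a bead one spot preserves the charge. -/
lemma chOf_move {U : Set ℤ} (hU : FinOcc U) {t₀ : ℤ} (h0 : t₀ ∈ U) (h1 : t₀ + 1 ∉ U) :
    chOf (insert (t₀ + 1) (U \ {t₀})) = chOf U := by
  have h2 : t₀ + 1 ∉ U \ {t₀} := fun hc => h1 hc.1
  rw [chOf_insert (hU.diff t₀) h2, chOf_diff hU h0]
  ring

end Stmt0Aux
namespace Stmt0Aux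

/-- Shifting all beads up by one decreases the charge by 1. -/
lemma chOf_shift {U : Set ℤ} (hU : FinOcc U) :
    chOf {t : ℤ | t - 1 ∈ U} = chOf U - 1 := by
  set V : Set ℤ := {t : ℤ | t - 1 ∈ U} with hV
  have h1 : V ∩ Set.Iio 0 = (· + 1) '' (U ∩ Set.Iio (-1)) := by
    ext t
    simp only [hV, Set.mem_inter_iff, Set.mem_setOf_eq, Set.mem_Iio, Set.mem_image]
    constructor
    · rintro ⟨ht, ht0⟩; exact ⟨t - 1, ⟨ht, by omega⟩, by ring⟩
    · rintro ⟨s, ⟨hs, hs0⟩, rfl⟩; exact ⟨by simpa using hs, by omega⟩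
  have h2 : Vᶜ ∩ Set.Ici 0 = (· + 1) '' (Uᶜ ∩ Set.Ici (-1)) := by
    ext t
    simp only [hV, Set.mem_inter_iff, Set.mem_compl_iff, Set.mem_setOf_eq, Set.mem_Ici,
      Set.mem_image]
    constructor
    · rintro ⟨ht, ht0⟩; exact ⟨t - 1, ⟨ht, by omega⟩, by ring⟩
    · rintro ⟨s, ⟨hs, hs0⟩, rfl⟩; exact ⟨by simpa using hs, by omega⟩
  have hinj : Function.Injective (· + 1 : ℤ → ℤ) := fun a b h => by simpa using h
  rw [chOf, chOf, h1, h2, Set.ncard_image_of_injective _ hinj,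
    Set.ncard_image_of_injective _ hinj]
  -- split on whether -1 ∈ U
  by_cases hm : (-1 : ℤ) ∈ U
  · have e1 : U ∩ Set.Iio 0 = insert (-1) (U ∩ Set.Iio (-1)) := by
      ext t
      simp only [Set.mem_inter_iff, Set.mem_Iio, Set.mem_insert_iff]
      constructor
      · rintro ⟨ht, ht0⟩
        rcases eq_or_lt_of_le (by omega : t ≤ -1) with h | h
        · exact Or.inl h
        · exact Or.inr ⟨ht, by omega⟩
      · rintro (rfl | ⟨ht, ht0⟩)
        · exact ⟨hm, by omega⟩
        · exact ⟨ht, by omega⟩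
    have e2 : Uᶜ ∩ Set.Ici (-1) = Uᶜ ∩ Set.Ici 0 := by
      ext t
      simp only [Set.mem_inter_iff, Set.mem_compl_iff, Set.mem_Ici]
      constructor
      · rintro ⟨ht, ht0⟩
        rcases eq_or_lt_of_le ht0 with h | h
        · exact absurd hm (h ▸ ht)
        · exact ⟨ht, by omega⟩
      · rintro ⟨ht, ht0⟩; exact ⟨ht, by omega⟩
    have hfin : (U ∩ Set.Iio (-1)).Finite :=
      hU.1.subset (fun t ⟨ht, ht0⟩ => ⟨ht, by simp at ht0 ⊢; omega⟩)
    have hnm : (-1 : ℤ) ∉ U ∩ Set.Iio (-1) := fun hc => by simp at hc; try omega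
    rw [e1, e2, Set.ncard_insert_of_notMem hnm hfin]
    push_cast; ring
  · have e1 : U ∩ Set.Iio 0 = U ∩ Set.Iio (-1) := by
      ext t
      simp only [Set.mem_inter_iff, Set.mem_Iio]
      constructor
      · rintro ⟨ht, ht0⟩
        rcases eq_or_lt_of_le (by omega : t ≤ -1) with h | h
        · exact absurd (h ▸ ht) hm
        · exact ⟨ht, by omega⟩
      · rintro ⟨ht, ht0⟩; exact ⟨ht, by omega⟩
    have e2 : Uᶜ ∩ Set.Ici (-1) = insert (-1) (Uᶜ ∩ Set.Ici 0) := by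
      ext t
      simp only [Set.mem_inter_iff, Set.mem_compl_iff, Set.mem_Ici, Set.mem_insert_iff]
      constructor
      · rintro ⟨ht, ht0⟩
        rcases eq_or_lt_of_le ht0 with h | h
        · exact Or.inl h.symm
        · exact Or.inr ⟨ht, by omega⟩
      · rintro (rfl | ⟨ht, ht0⟩)
        · exact ⟨hm, le_refl _⟩
        · exact ⟨ht, by omega⟩
    have hfin : (Uᶜ ∩ Set.Ici 0).Finite := hU.2
    have hnm : (-1 : ℤ) ∉ Uᶜ ∩ Set.Ici 0 := fun hc => by
      have := hc.2; simp at this; try omega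
    rw [e1, e2, Set.ncard_insert_of_notMem hnm hfin]
    push_cast; ring

/-- Charge of a tail. -/
lemma chOf_tail (t₀ : ℤ) : chOf {t : ℤ | t₀ ≤ t} = -t₀ := by
  have h1 : {t : ℤ | t₀ ≤ t} ∩ Set.Iio 0 = ↑(Finset.Ico t₀ 0) := by
    ext t; simp only [Set.mem_inter_iff, Set.mem_setOf_eq, Set.mem_Iio, Finset.coe_Ico,
      Set.mem_Ico]; try tauto
  have h2 : {t : ℤ | t₀ ≤ t}ᶜ ∩ Set.Ici 0 = ↑(Finset.Ico 0 t₀) := by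
    ext t; simp only [Set.mem_inter_iff, Set.mem_compl_iff, Set.mem_setOf_eq, Set.mem_Ici,
      Finset.coe_Ico, Set.mem_Ico]; try omega
  rw [chOf, h1, h2, Set.ncard_coe_finset, Set.ncard_coe_finset, Int.card_Ico, Int.card_Ico]
  omega

lemma occSet_swap (e : ℤ) (Θ : Set ℤ × Set ℤ) (v : ℤ) :
    occSet e (swapP Θ) v = {t : ℤ | t - 1 ∈ occSet e Θ (v - e)} := by
  ext t
  have hpar : Even (t - 1) ↔ ¬ Even t := by
    constructor
    · rintro ⟨m, hm⟩ ⟨n, hn⟩; omega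
    · intro h
      rcases Int.even_or_odd t with he | ⟨m, hm⟩
      · exact absurd he h
      · exact ⟨m, by omega⟩
  have hval : v - e - (t - 1) * e = v - t * e := by ring
  simp only [occSet, swapP, Set.mem_setOf_eq, hval]
  by_cases hev : Even t
  · rw [if_pos hev, if_neg (by rw [hpar]; exact fun h => h hev)]
  · rw [if_neg hev, if_pos (hpar.mpr hev)]

lemma chg_swap {e : ℤ} (he : 1 ≤ e) {Θ : Set ℤ × Set ℤ} (hβ : Bpair Θ) (v : ℤ) :
    chg e (swapP Θ) v = chg e Θ (v - e) - 1 := by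
  rw [chg, occSet_swap, chOf_shift (finOcc_occSet he hβ (v - e))]
  rfl

lemma chg_two {e : ℤ} (he : 1 ≤ e) {Θ : Set ℤ × Set ℤ} (hβ : Bpair Θ) (v : ℤ) :
    chg e Θ v = chg e Θ (v - 2 * e) - 2 := by
  have h1 := chg_swap he hβ.swap v
  rw [swapP_swapP] at h1
  have h2 := chg_swap he hβ (v - e)
  have : v - e - e = v - 2 * e := by ring
  rw [this] at h2
  omega

end Stmt0Aux
namespace Stmt0Aux

/-- One cohook removal in row 1: effect on charges. -/
lemma chg_step_row1 {e : ℤ} (he : 1 ≤ e) {Θ Θ' : Set ℤ × Set ℤ} (hβ : Bpair Θ)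
    (h : RemoveCohookRow1 e Θ Θ') (v : ℤ) : chg e Θ' v = chg e (swapP Θ) v := by
  obtain ⟨x, hx1, hx2, rfl⟩ := h
  have hβs : Bpair (swapP Θ) := hβ.swap
  have hfin := finOcc_occSet he hβs v
  by_cases hex : ∃ t : ℤ, ¬ Even t ∧ v - t * e = x
  · obtain ⟨t₀, ht₀odd, ht₀⟩ := hex
    have huniq : ∀ t : ℤ, v - t * e = x → t = t₀ := by
      intro t ht
      have : (t - t₀) * e = 0 := by rw [sub_mul]; omega
      rcases mul_eq_zero.1 this with h | h
      · omega
      · omega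
    have huniq' : ∀ t : ℤ, v - t * e = x - e → t = t₀ + 1 := by
      intro t ht
      have : v - (t - 1) * e = x := by rw [sub_mul]; omega
      have := huniq _ this
      omega
    have hkey : occSet e (Θ.2 ∪ {x - e}, Θ.1 \ {x}) v
        = insert (t₀ + 1) (occSet e (swapP Θ) v \ {t₀}) := by
      ext t
      simp only [occSet, swapP, Set.mem_setOf_eq, Set.mem_insert_iff, Set.mem_diff,
        Set.mem_singleton_iff, Set.mem_union]
      by_cases hev : Even t
      · rw [if_pos hev, if_pos hev]
        constructor
        · rintro (ht | ht)
          · refine Or.inr ⟨ht, ?_⟩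
            rintro rfl
            exact (by exact ht₀odd hev : False)
          · exact Or.inl (huniq' t (by simpa using ht))
        · rintro (rfl | ⟨ht, hne⟩)
          · refine Or.inr ?_
            have hstep : v - (t₀ + 1) * e = (v - t₀ * e) - e := by ring
            rw [hstep, ht₀]
          · exact Or.inl ht
      · rw [if_neg hev, if_neg hev]
        constructor
        · rintro ⟨ht, hne⟩
          refine Or.inr ⟨ht, fun hc => hne ?_⟩
          rw [hc, ht₀]
        · rintro (rfl | ⟨ht, hne⟩)
          · exact absurd (Int.even_add_one.mpr ht₀odd) hev
          · exact ⟨ht, fun hc => hne (huniq t hc)⟩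
    have h0 : t₀ ∈ occSet e (swapP Θ) v := by
      simp only [occSet, swapP, Set.mem_setOf_eq, if_neg ht₀odd, ht₀]
      exact hx1
    have h1 : t₀ + 1 ∉ occSet e (swapP Θ) v := by
      have hev : Even (t₀ + 1) := Int.even_add_one.mpr ht₀odd
      simp only [occSet, swapP, Set.mem_setOf_eq, if_pos hev]
      intro hc
      have : v - (t₀ + 1) * e = x - e := by rw [add_mul]; omega
      rw [this] at hc
      exact hx2 hc
    rw [chg, hkey, chOf_move hfin h0 h1]
    rfl
  · push_neg at hex
    have hkey : occSet e (Θ.2 ∪ {x - e}, Θ.1 \ {x}) v = occSet e (swapP Θ) v := by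
      ext t
      simp only [occSet, swapP, Set.mem_setOf_eq, Set.mem_union, Set.mem_diff,
        Set.mem_singleton_iff]
      by_cases hev : Even t
      · rw [if_pos hev, if_pos hev]
        constructor
        · rintro (ht | ht)
          · exact ht
          · exfalso
            have hodd : ¬ Even (t - 1) := by
              intro hc
              rcases hc with ⟨m, hm⟩; rcases hev with ⟨n, hn⟩; omega
            exact (hex (t - 1) hodd (by rw [sub_mul]; omega)).elim
        · intro ht; exact Or.inl ht
      · rw [if_neg hev, if_neg hev]
        constructor
        · rintro ⟨ht, _⟩; exact ht
        · intro ht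
          exact ⟨ht, fun hc => (hex t hev hc).elim⟩
    rw [chg, hkey]
    rfl

/-- One cohook removal: effect on charges. -/
lemma chg_step {e : ℤ} (he : 1 ≤ e) {Θ Θ' : Set ℤ × Set ℤ} (hβ : Bpair Θ)
    (h : RemoveCohook e Θ Θ') (v : ℤ) : chg e Θ' v = chg e (swapP Θ) v := by
  rcases h with h | h
  · exact chg_step_row1 he hβ h v
  · -- row 2: reduce to row 1 for the swapped pair
    obtain ⟨x, hx1, hx2, rfl⟩ := h
    have hrow1 : RemoveCohookRow1 e (swapP Θ) (Θ.1 ∪ {x - e}, Θ.2 \ {x}) :=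
      ⟨x, hx1, hx2, rfl⟩
    have hβ' : Bpair (Θ.2 \ {x}, Θ.1 ∪ {x - e}) :=
      ⟨betaSet_diff_singleton hβ.2 _, betaSet_union_singleton hβ.1 _⟩
    have h1 : ∀ w, chg e (Θ.1 ∪ {x - e}, Θ.2 \ {x}) w = chg e Θ w := by
      intro w
      have := chg_step_row1 he hβ.swap hrow1 w
      rwa [swapP_swapP] at this
    -- (Θ.2 \ {x}, Θ.1 ∪ {x-e}) = swapP (Θ.1 ∪ {x-e}, Θ.2 \ {x})
    have h2 : chg e (Θ.2 \ {x}, Θ.1 ∪ {x - e}) v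
        = chg e (Θ.1 ∪ {x - e}, Θ.2 \ {x}) (v - e) - 1 := by
      have := chg_swap he (Θ := (Θ.1 ∪ {x - e}, Θ.2 \ {x}))
        ⟨betaSet_union_singleton hβ.1 _, betaSet_diff_singleton hβ.2 _⟩ v
      exact this
    rw [h2, h1, chg_swap he hβ v]

lemma bpair_rtg {e : ℤ} {Θ C : Set ℤ × Set ℤ}
    (h : Relation.ReflTransGen (RemoveCohook e) Θ C) (hβ : Bpair Θ) : Bpair C := by
  induction h with
  | refl => exact hβ
  | tail _ hstep ih => exact bpair_step hstep ih

/-- Along any sequence of cohook removals, the charge function either stays the same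
or becomes that of the swapped symbol. -/
lemma chg_rtg {e : ℤ} (he : 1 ≤ e) {Θ C : Set ℤ × Set ℤ}
    (h : Relation.ReflTransGen (RemoveCohook e) Θ C) :
    Bpair Θ → (∀ v, chg e C v = chg e Θ v) ∨ (∀ v, chg e C v = chg e (swapP Θ) v) := by
  induction h using Relation.ReflTransGen.head_induction_on with
  | refl => exact fun _ => Or.inl (fun _ => rfl)
  | @head a c hstep hrest ih =>
    intro hβ
    have hβc : Bpair c := bpair_step hstep hβ
    have h1 : ∀ v, chg e c v = chg e (swapP a) v := chg_step he hβ hstep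
    have h2 : ∀ v, chg e (swapP c) v = chg e a v := by
      intro v
      have := chg_step he hβ.swap (removeCohook_swap hstep) v
      rwa [swapP_swapP] at this
    rcases ih hβc with hA | hB
    · exact Or.inr (fun v => (hA v).trans (h1 v))
    · exact Or.inl (fun v => (hB v).trans (h2 v))

end Stmt0Aux
namespace Stmt0Aux

/-- For a cocore, each chain is a tail, determined by the charge. -/
lemma cocore_occ {e : ℤ} (he : 1 ≤ e) {C : Set ℤ × Set ℤ} (hβ : Bpair C)
    (hnc : ¬ HasCohook e C) (v : ℤ) : ∀ t : ℤ, t ∈ occSet e C v ↔ -(chg e C v) ≤ t := by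
  have hup : ∀ s : ℤ, s ∈ occSet e C v → s + 1 ∈ occSet e C v := by
    intro s hs
    rw [HasCohook] at hnc
    push_neg at hnc
    obtain ⟨h1, h2⟩ := hnc
    simp only [occSet, Set.mem_setOf_eq] at hs ⊢
    have hval : v - (s + 1) * e = (v - s * e) - e := by ring
    by_cases hev : Even s
    · rw [if_pos hev] at hs
      rw [if_neg (by rw [Int.even_add_one]; exact fun hc => hc hev), hval]
      exact h1 _ hs
    · rw [if_neg hev] at hs
      rw [if_pos (Int.even_add_one.mpr hev), hval]
      exact h2 _ hs
  have hup' : ∀ s u : ℤ, s ∈ occSet e C v → s ≤ u → u ∈ occSet e C v := by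
    intro s u hs hsu
    exact Int.le_induction hs (fun n _ ih => hup n ih) u hsu
  obtain ⟨⟨⟨c₁, hc₁⟩, ⟨C₁, hC₁⟩⟩, ⟨⟨c₂, hc₂⟩, ⟨C₂, hC₂⟩⟩⟩ := hβ
  have hinh : (max 1 (v - min c₁ c₂ + 1)) ∈ occSet e C v := by
    set s := max 1 (v - min c₁ c₂ + 1) with hs
    have hs1 : 1 ≤ s := le_max_left _ _
    have hs2 : v - min c₁ c₂ + 1 ≤ s := le_max_right _ _
    have hse : s ≤ s * e := by nlinarith
    have hval : v - s * e < min c₁ c₂ := by omega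
    simp only [occSet, Set.mem_setOf_eq]
    split_ifs
    · exact hc₁ _ (by omega)
    · exact hc₂ _ (by omega)
  have hnotall : (min (-1) (v - max C₁ C₂)) ∉ occSet e C v := by
    set s := min (-1) (v - max C₁ C₂) with hs
    have hs1 : s ≤ -1 := min_le_left _ _
    have hs2 : s ≤ v - max C₁ C₂ := min_le_right _ _
    have hse : s * e ≤ s := by nlinarith
    have hval : max C₁ C₂ ≤ v - s * e := by omega
    simp only [occSet, Set.mem_setOf_eq]
    split_ifs
    · exact hC₁ _ (by omega)
    · exact hC₂ _ (by omega)
  have hbdd : ∀ z : ℤ, z ∈ occSet e C v → min (-1) (v - max C₁ C₂) ≤ z := by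
    intro z hz
    by_contra hcon
    push_neg at hcon
    exact hnotall (hup' z _ hz (by omega))
  obtain ⟨lb, hlb1, hlb2⟩ := Int.exists_least_of_bdd
    (P := fun z => z ∈ occSet e C v) ⟨_, hbdd⟩ ⟨_, hinh⟩
  have hU : occSet e C v = {t : ℤ | lb ≤ t} := by
    ext t
    exact ⟨fun ht => hlb2 t ht, fun ht => hup' lb t hlb1 ht⟩
  intro t
  rw [hU, chg, hU, chOf_tail]
  simp

lemma cocore_mem_fst {e : ℤ} (he : 1 ≤ e) {C : Set ℤ × Set ℤ} (hβ : Bpair C)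
    (hnc : ¬ HasCohook e C) (x : ℤ) : x ∈ C.1 ↔ 0 ≤ chg e C x := by
  have h := cocore_occ he hβ hnc x 0
  simp only [occSet, Set.mem_setOf_eq, if_pos (show Even (0:ℤ) from ⟨0, by norm_num⟩), zero_mul, sub_zero] at h
  rw [h]
  omega

lemma cocore_mem_snd {e : ℤ} (he : 1 ≤ e) {C : Set ℤ × Set ℤ} (hβ : Bpair C)
    (hnc : ¬ HasCohook e C) (x : ℤ) : x ∈ C.2 ↔ -1 ≤ chg e C (x + e) := by
  have h := cocore_occ he hβ hnc (x + e) 1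
  have hodd : ¬ Even (1 : ℤ) := by decide
  simp only [occSet, Set.mem_setOf_eq, if_neg hodd, one_mul, add_sub_cancel_right] at h
  rw [h]
  omega

end Stmt0Aux
namespace Stmt0Aux

/-- The generic cocore occupancy pattern. -/
def B0 (k : ℤ) : Set ℤ := {t : ℤ | (Even t ∧ 2 ≤ t) ∨ (¬ Even t ∧ 1 - 2*k ≤ t)}

lemma finOcc_B0 (k : ℤ) (hk : 0 ≤ k) : FinOcc (B0 k) ∧ chOf (B0 k) = k - 1 := by
  have h1 : B0 k ∩ Set.Iio 0 = (fun j : ℤ => 2*j + 1 - 2*k) '' (Set.Ico 0 k) := by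
    ext t
    simp only [B0, Set.mem_inter_iff, Set.mem_setOf_eq, Set.mem_Iio, Set.mem_image,
      Set.mem_Ico]
    constructor
    · rintro ⟨(⟨hev, h2⟩ | ⟨hod, h2⟩), ht0⟩
      · omega
      · rw [Int.even_iff] at hod
        refine ⟨(t - 1)/2 + k, ⟨by omega, by omega⟩, by omega⟩
    · rintro ⟨j, ⟨hj0, hjk⟩, rfl⟩
      refine ⟨Or.inr ⟨?_, by omega⟩, by omega⟩
      rw [Int.even_iff]
      omega
  have h2 : (B0 k)ᶜ ∩ Set.Ici 0 = {0} := by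
    ext t
    simp only [B0, Set.mem_inter_iff, Set.mem_compl_iff, Set.mem_setOf_eq, Set.mem_Ici,
      Set.mem_singleton_iff]
    rw [Int.even_iff]
    constructor
    · rintro ⟨hn, ht0⟩
      push_neg at hn
      by_contra hne
      rcases Int.emod_two_eq_zero_or_one t with hp | hp
      · have := hn.1 hp; omega
      · have := hn.2 (by omega); omega
    · rintro rfl
      constructor
      · rintro (⟨_, h⟩ | ⟨h, _⟩)
        · omega
        · exact h rfl
      · omega
  have hinj : Function.Injective (fun j : ℤ => 2*j + 1 - 2*k) := fun a b h => by
    simp only at h; omega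
  have hfin1 : (B0 k ∩ Set.Iio 0).Finite := by
    rw [h1]; exact ((Set.finite_Ico 0 k).image _)
  have hfin2 : ((B0 k)ᶜ ∩ Set.Ici 0).Finite := by rw [h2]; exact Set.finite_singleton 0
  refine ⟨⟨hfin1, hfin2⟩, ?_⟩
  rw [chOf, h1, h2, Set.ncard_image_of_injective _ hinj, Set.ncard_singleton]
  have : Set.Ico (0:ℤ) k = ↑(Finset.Ico (0:ℤ) k) := (Finset.coe_Ico 0 k).symm
  rw [this, Set.ncard_coe_finset, Int.card_Ico]
  omega

section ThetaComputation

variable {e k b₁ : ℤ} {X₁ X₂ : Set ℤ}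
variable (he : 1 ≤ e) (hk : 0 ≤ k)
variable (hIo1 : Set.Iio (b₁ - e + 1) ⊆ X₁) (hIc1 : X₁ ⊆ Set.Iic b₁)
variable (hIo2 : Set.Iio (b₁ + (2*k+1)*e - e + 1) ⊆ X₂)
variable (hIc2 : X₂ ⊆ Set.Iic (b₁ + (2*k+1)*e))

include he hk hIo1 hIc1 hIo2 hIc2

lemma bpair_theta : Bpair (X₁, X₂) := by
  refine ⟨⟨⟨b₁ - e + 1, fun z hz => hIo1 hz⟩, ⟨b₁ + 1, fun z hz hc => ?_⟩⟩,
    ⟨⟨b₁ + (2*k+1)*e - e + 1, fun z hz => hIo2 hz⟩,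
      ⟨b₁ + (2*k+1)*e + 1, fun z hz hc => ?_⟩⟩⟩
  · have := hIc1 hc; simp only [Set.mem_Iic] at this; omega
  · have := hIc2 hc; simp only [Set.mem_Iic] at this; omega

lemma occ_theta (i q t : ℤ) (hi : 1 ≤ i) (hie : i ≤ e) :
    t ∈ occSet e (X₁, X₂) (b₁ - e + i + q*e) ↔
      (if Even t then (q + 1 ≤ t ∨ (t = q ∧ b₁ - e + i ∈ X₁))
       else (q - 2*k ≤ t ∨ (t = q - 2*k - 1 ∧ b₁ - e + i + (2*k+1)*e ∈ X₂))) := by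
  simp only [occSet, Set.mem_setOf_eq]
  by_cases hev : Even t
  · rw [if_pos hev, if_pos hev]
    rcases lt_trichotomy t q with h | h | h
    · have h1 : e ≤ (q - t) * e := by nlinarith
      have hval : b₁ - e + i + q*e - t*e = b₁ - e + i + (q-t)*e := by ring
      constructor
      · intro hc
        have h2 := hIc1 hc
        simp only [Set.mem_Iic] at h2
        rw [hval] at h2
        omega
      · rintro (h2 | ⟨rfl, _⟩) <;> omega
    · subst h
      have hval : b₁ - e + i + t*e - t*e = b₁ - e + i := by ring
      rw [hval]
      constructor
      · intro hc; exact Or.inr ⟨rfl, hc⟩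
      · rintro (h2 | ⟨_, hc⟩) <;> [omega; exact hc]
    · have h1 : (q - t) * e ≤ -e := by nlinarith
      have hval : b₁ - e + i + q*e - t*e = b₁ - e + i + (q-t)*e := by ring
      constructor
      · intro _; exact Or.inl (by omega)
      · intro _
        apply hIo1
        simp only [Set.mem_Iio]
        omega
  · rw [if_neg hev, if_neg hev]
    rcases lt_trichotomy t (q - 2*k - 1) with h | h | h
    · have h1 : e ≤ (q - 2*k - 1 - t) * e := by nlinarith
      have hval : b₁ - e + i + q*e - t*e
          = (b₁ + (2*k+1)*e) - e + i + (q - 2*k - 1 - t)*e := by ring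
      constructor
      · intro hc
        have h2 := hIc2 hc
        simp only [Set.mem_Iic] at h2
        rw [hval] at h2
        omega
      · rintro (h2 | ⟨rfl, _⟩) <;> omega
    · subst h
      have hval : b₁ - e + i + q*e - (q - 2*k - 1)*e = b₁ - e + i + (2*k+1)*e := by ring
      rw [hval]
      constructor
      · intro hc; exact Or.inr ⟨rfl, hc⟩
      · rintro (h2 | ⟨_, hc⟩) <;> [omega; exact hc]
    · have h1 : (q - 2*k - 1 - t) * e ≤ -e := by nlinarith
      have hval : b₁ - e + i + q*e - t*e
          = (b₁ + (2*k+1)*e) - e + i + (q - 2*k - 1 - t)*e := by ring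
      constructor
      · intro _; exact Or.inl (by omega)
      · intro _
        apply hIo2
        simp only [Set.mem_Iio]
        omega

lemma occ_theta_q1 (i : ℤ) (hi : 1 ≤ i) (hie : i ≤ e) :
    occSet e (X₁, X₂) (b₁ - e + i + e) = B0 k := by
  ext t
  have h := occ_theta he hk hIo1 hIc1 hIo2 hIc2 i 1 t hi hie
  rw [one_mul] at h
  rw [h]
  simp only [B0, Set.mem_setOf_eq]
  by_cases hev : Even t
  · rw [if_pos hev]
    rw [Int.even_iff] at hev
    constructor
    · rintro (h2 | ⟨rfl, _⟩)
      · exact Or.inl ⟨Int.even_iff.mpr hev, by omega⟩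
      · omega
    · rintro (⟨_, h2⟩ | ⟨hne, _⟩)
      · exact Or.inl (by omega)
      · exact absurd (Int.even_iff.mpr hev) hne
  · rw [if_neg hev]
    rw [Int.even_iff] at hev
    constructor
    · rintro (h2 | ⟨rfl, _⟩)
      · exact Or.inr ⟨fun hc => hev (Int.even_iff.mp hc), by omega⟩
      · exfalso; omega
    · rintro (⟨hp, _⟩ | ⟨_, h2⟩)
      · exact absurd (Int.even_iff.mp hp) hev
      · exact Or.inl (by omega)

lemma occ_theta_q0 (i : ℤ) (hi : 1 ≤ i) (hie : i ≤ e) :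
    occSet e (X₁, X₂) (b₁ - e + i) =
      {t : ℤ | t ∈ B0 k ∨ (t = 0 ∧ b₁ - e + i ∈ X₁)
        ∨ (t = -2*k - 1 ∧ b₁ - e + i + (2*k+1)*e ∈ X₂)} := by
  ext t
  have h := occ_theta he hk hIo1 hIc1 hIo2 hIc2 i 0 t hi hie
  rw [zero_mul, add_zero] at h
  have h01 : (0:ℤ) - 2*k - 1 = -2*k - 1 := by ring
  rw [h01] at h
  rw [h]
  simp only [B0, Set.mem_setOf_eq]
  by_cases hev : Even t
  · rw [if_pos hev]
    have hpar : t % 2 = 0 := Int.even_iff.mp hev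
    constructor
    · rintro (h2 | ⟨rfl, hm⟩)
      · exact Or.inl (Or.inl ⟨hev, by omega⟩)
      · exact Or.inr (Or.inl ⟨rfl, hm⟩)
    · rintro ((⟨_, h2⟩ | ⟨hne, _⟩) | (⟨rfl, hm⟩ | ⟨rfl, _⟩))
      · exact Or.inl (by omega)
      · exact absurd hev hne
      · exact Or.inr ⟨rfl, hm⟩
      · exfalso; omega
  · rw [if_neg hev]
    have hpar : t % 2 = 1 := Int.not_even_iff.mp hev
    constructor
    · rintro (h2 | ⟨rfl, hm⟩)
      · exact Or.inl (Or.inr ⟨hev, by omega⟩)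
      · exact Or.inr (Or.inr ⟨rfl, hm⟩)
    · rintro ((⟨hp, _⟩ | ⟨_, h2⟩) | (⟨rfl, _⟩ | ⟨rfl, hm⟩))
      · exact absurd hp hev
      · exact Or.inl (by omega)
      · exfalso; omega
      · exact Or.inr ⟨rfl, hm⟩

lemma chg_theta_q0 (i : ℤ) (hi : 1 ≤ i) (hie : i ≤ e) :
    chg e (X₁, X₂) (b₁ - e + i) = k - 1
      + (if b₁ - e + i ∈ X₁ then 1 else 0)
      + (if b₁ - e + i + (2*k+1)*e ∈ X₂ then 1 else 0) := by
  obtain ⟨hfin, hval⟩ := finOcc_B0 k hk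
  have hkey := occ_theta_q0 he hk hIo1 hIc1 hIo2 hIc2 i hi hie
  have h0B : (0 : ℤ) ∉ B0 k := by
    simp only [B0, Set.mem_setOf_eq]
    rintro (⟨_, h⟩ | ⟨h, _⟩)
    · omega
    · exact h ⟨0, by norm_num⟩
  have h2B : (-2*k - 1 : ℤ) ∉ B0 k := by
    simp only [B0, Set.mem_setOf_eq]
    rintro (⟨h, _⟩ | ⟨_, h⟩)
    · rcases h with ⟨m, hm⟩; omega
    · omega
  by_cases hg : b₁ - e + i ∈ X₁ <;> by_cases hb : b₁ - e + i + (2*k+1)*e ∈ X₂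
  · have heq : occSet e (X₁, X₂) (b₁ - e + i) = insert 0 (insert (-2*k - 1) (B0 k)) := by
      rw [hkey]
      ext t
      simp only [Set.mem_setOf_eq, Set.mem_insert_iff]
      constructor
      · rintro (h | ⟨rfl, _⟩ | ⟨rfl, _⟩)
        · exact Or.inr (Or.inr h)
        · exact Or.inl rfl
        · exact Or.inr (Or.inl rfl)
      · rintro (rfl | rfl | h)
        · exact Or.inr (Or.inl ⟨rfl, hg⟩)
        · exact Or.inr (Or.inr ⟨rfl, hb⟩)
        · exact Or.inl h
    rw [chg, heq, chOf_insert ((hfin.insert _)) (by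
        simp only [Set.mem_insert_iff]
        push_neg
        exact ⟨by omega, h0B⟩),
      chOf_insert hfin h2B, hval, if_pos hg, if_pos hb]
    try ring
  · have heq : occSet e (X₁, X₂) (b₁ - e + i) = insert 0 (B0 k) := by
      rw [hkey]
      ext t
      simp only [Set.mem_setOf_eq, Set.mem_insert_iff]
      constructor
      · rintro (h | ⟨rfl, _⟩ | ⟨_, hm⟩)
        · exact Or.inr h
        · exact Or.inl rfl
        · exact absurd hm hb
      · rintro (rfl | h)
        · exact Or.inr (Or.inl ⟨rfl, hg⟩)
        · exact Or.inl h
    rw [chg, heq, chOf_insert hfin h0B, hval, if_pos hg, if_neg hb]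
    try ring
  · have heq : occSet e (X₁, X₂) (b₁ - e + i) = insert (-2*k - 1) (B0 k) := by
      rw [hkey]
      ext t
      simp only [Set.mem_setOf_eq, Set.mem_insert_iff]
      constructor
      · rintro (h | ⟨_, hm⟩ | ⟨rfl, _⟩)
        · exact Or.inr h
        · exact absurd hm hg
        · exact Or.inl rfl
      · rintro (rfl | h)
        · exact Or.inr (Or.inr ⟨rfl, hb⟩)
        · exact Or.inl h
    rw [chg, heq, chOf_insert hfin h2B, hval, if_neg hg, if_pos hb]
    try ring
  · have heq : occSet e (X₁, X₂) (b₁ - e + i) = B0 k := by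
      rw [hkey]
      ext t
      simp only [Set.mem_setOf_eq]
      constructor
      · rintro (h | ⟨_, hm⟩ | ⟨_, hm⟩)
        · exact h
        · exact absurd hm hg
        · exact absurd hm hb
      · exact fun h => Or.inl h
    rw [chg, heq, hval, if_neg hg, if_neg hb]
    try ring

lemma chg_theta_q1' (i : ℤ) (hi : 1 ≤ i) (hie : i ≤ e) :
    chg e (X₁, X₂) (b₁ - e + i + e) = k - 1 := by
  rw [chg, occ_theta_q1 he hk hIo1 hIc1 hIo2 hIc2 i hi hie, (finOcc_B0 k hk).2]

lemma chg_shift_nat (m : ℕ) (v : ℤ) :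
    chg e (X₁, X₂) (v + 2*(m : ℤ)*e) = chg e (X₁, X₂) v - 2*(m : ℤ) := by
  have hβ := bpair_theta he hk hIo1 hIc1 hIo2 hIc2
  induction m with
  | zero => simp
  | succ n ih =>
    have h2 := chg_two he hβ (v + 2*(n : ℤ)*e + 2*e)
    have harg : v + 2*(n : ℤ)*e + 2*e - 2*e = v + 2*(n : ℤ)*e := by ring
    rw [harg] at h2
    have harg2 : v + 2*((n : ℕ) + 1 : ℤ)*e = v + 2*(n : ℤ)*e + 2*e := by push_cast; ring
    push_cast
    rw [harg2, h2, ih]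
    ring

lemma chg_shift_natneg (m : ℕ) (v : ℤ) :
    chg e (X₁, X₂) (v - 2*(m : ℤ)*e) = chg e (X₁, X₂) v + 2*(m : ℤ) := by
  have hβ := bpair_theta he hk hIo1 hIc1 hIo2 hIc2
  induction m with
  | zero => simp
  | succ n ih =>
    have h2 := chg_two he hβ (v - 2*(n : ℤ)*e)
    have harg : v - 2*(n : ℤ)*e - 2*e = v - 2*((n : ℕ) + 1 : ℤ)*e := by push_cast; ring
    rw [harg] at h2
    push_cast
    have : chg e (X₁, X₂) (v - 2*((n : ℤ) + 1)*e) = chg e (X₁, X₂) (v - 2*(n:ℤ)*e) + 2 := by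
      push_cast at h2; omega
    rw [this, ih]
    ring

lemma chg_theta_shift (v : ℤ) (m : ℤ) :
    chg e (X₁, X₂) (v + 2*m*e) = chg e (X₁, X₂) v - 2*m := by
  rcases le_or_gt 0 m with hm | hm
  · lift m to ℕ using hm
    exact chg_shift_nat he hk hIo1 hIc1 hIo2 hIc2 m v
  · have h0 : 0 ≤ -m := by omega
    have key := chg_shift_natneg he hk hIo1 hIc1 hIo2 hIc2 (-m).toNat v
    have hcast : ((-m).toNat : ℤ) = -m := Int.toNat_of_nonneg h0
    rw [hcast] at key
    have harg : v - 2*(-m)*e = v + 2*m*e := by ring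
    rw [harg] at key
    omega

/-- The master formula for the charges of a `d`-small symbol. -/
lemma chg_theta (i q : ℤ) (hi : 1 ≤ i) (hie : i ≤ e) :
    chg e (X₁, X₂) (b₁ - e + i + q*e) = k - 1
      + (if Even q then
          (if b₁ - e + i ∈ X₁ then 1 else 0)
          + (if b₁ - e + i + (2*k+1)*e ∈ X₂ then 1 else 0) else 1) - q := by
  rcases Int.even_or_odd q with ⟨m, hm⟩ | ⟨m, hm⟩
  · have harg : b₁ - e + i + q*e = (b₁ - e + i) + 2*m*e := by rw [hm]; ring
    rw [harg, chg_theta_shift he hk hIo1 hIc1 hIo2 hIc2,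
      chg_theta_q0 he hk hIo1 hIc1 hIo2 hIc2 i hi hie, if_pos (show Even q from ⟨m, hm⟩)]
    linarith
  · have harg : b₁ - e + i + q*e = (b₁ - e + i + e) + 2*m*e := by rw [hm]; ring
    rw [harg, chg_theta_shift he hk hIo1 hIc1 hIo2 hIc2,
      chg_theta_q1' he hk hIo1 hIc1 hIo2 hIc2 i hi hie,
      if_neg (show ¬ Even q by rw [Int.even_iff]; omega)]
    linarith

end ThetaComputation

end Stmt0Aux
namespace Stmt0Aux

/-! ### topB / botB lemmas -/

lemma subset_Iic_of_topB {X : Set ℤ} (hX : IsBetaSet X) {b : ℤ} (h : topB X ≤ b) :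
    X ⊆ Set.Iic b := by
  obtain ⟨⟨c, hc⟩, ⟨Cb, hCb⟩⟩ := hX
  have hbdd : BddAbove X := by
    refine ⟨Cb, fun y hy => ?_⟩
    by_contra hcon
    exact hCb y (by omega) hy
  intro x hx
  exact le_trans (le_csSup hbdd hx) h

lemma topB_le_of_subset {X : Set ℤ} (hne : X.Nonempty) {b : ℤ} (h : X ⊆ Set.Iic b) :
    topB X ≤ b := csSup_le hne h

lemma subset_of_le_botB {X : Set ℤ} (hX : IsBetaSet X) {a : ℤ} (h : a ≤ botB X) :
    Set.Iio a ⊆ X := by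
  obtain ⟨⟨c, hc⟩, ⟨Cb, hCb⟩⟩ := hX
  set S : Set ℤ := {z : ℤ | ∀ w : ℤ, w < z → w ∈ X} with hS
  have hSne : S.Nonempty := ⟨c, fun w hw => hc w hw⟩
  have hSbdd : BddAbove S := by
    refine ⟨Cb, fun z hz => ?_⟩
    by_contra hcon
    push_neg at hcon
    exact hCb Cb (le_refl _) (hz Cb hcon)
  have hmem : sSup S ∈ S := Int.csSup_mem hSne hSbdd
  intro w hw
  simp only [Set.mem_Iio] at hw
  exact hmem w (by have : a ≤ sSup S := h; omega)

lemma le_botB_of_subset {X : Set ℤ} {a : ℤ} (h : Set.Iio a ⊆ X)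
    (hup : ∃ Cb : ℤ, ∀ z : ℤ, Cb ≤ z → z ∉ X) : a ≤ botB X := by
  obtain ⟨Cb, hCb⟩ := hup
  set S : Set ℤ := {z : ℤ | ∀ w : ℤ, w < z → w ∈ X} with hS
  have hSbdd : BddAbove S := by
    refine ⟨Cb, fun z hz => ?_⟩
    by_contra hcon
    push_neg at hcon
    exact hCb Cb (le_refl _) (hz Cb hcon)
  exact le_csSup hSbdd (fun w hw => h hw)

/-! ### Swap symmetry lemmas -/

lemma isDSmallWith_swap {d : ℤ} (hdE : Even d) {X₁ X₂ : Set ℤ} {a₁ b₁ a₂ b₂ : ℤ}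
    (h : IsDSmallWith d X₁ X₂ a₁ b₁ a₂ b₂) : IsDSmallWith d X₂ X₁ a₂ b₂ a₁ b₁ := by
  obtain ⟨r, hr⟩ := hdE
  have hde : d / 2 = r := by omega
  obtain ⟨c, hc⟩ := h.cong
  refine ⟨h.len₂, h.len₁, h.bot₂, h.bot₁, h.top₂, h.top₁, ⟨-c - 1, ?_⟩⟩
  rw [hde] at hc ⊢
  have : d * (-c - 1) = -(d * c) - d := by ring
  omega

lemma dsmall_b_ne {d : ℤ} (hd : 2 ≤ d) (hdE : Even d) {X₁ X₂ : Set ℤ} {a₁ b₁ a₂ b₂ : ℤ}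
    (h : IsDSmallWith d X₁ X₂ a₁ b₁ a₂ b₂) : b₁ ≠ b₂ := by
  obtain ⟨r, hr⟩ := hdE
  have hde : d / 2 = r := by omega
  obtain ⟨c, hc⟩ := h.cong
  rw [hde] at hc
  intro hcon
  rw [hcon] at hc
  have hc' : d * c = -r := by omega
  rcases lt_trichotomy c 0 with h1 | h1 | h1
  · nlinarith
  · rw [h1] at hc'; omega
  · nlinarith

lemma wud_swap (d : ℤ) (X₁ X₂ : Set ℤ) {b₁ b₂ : ℤ} (hne : b₁ ≠ b₂) (i : ℤ) :
    wud d X₂ X₁ b₂ b₁ i = wud d X₁ X₂ b₁ b₂ i := by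
  have hmax : max b₂ b₁ = max b₁ b₂ := max_comm _ _
  have habs : |b₁ - b₂| = |b₂ - b₁| := abs_sub_comm _ _
  rcases hne.lt_or_gt with h | h
  · have h1 : rightSet X₂ X₁ b₂ b₁ = X₂ := by rw [rightSet, if_neg (by omega)]
    have h2 : rightSet X₁ X₂ b₁ b₂ = X₂ := by rw [rightSet, if_pos h]
    have h3 : leftSet X₂ X₁ b₂ b₁ = X₁ := by rw [leftSet, if_neg (by omega)]
    have h4 : leftSet X₁ X₂ b₁ b₂ = X₁ := by rw [leftSet, if_pos h]
    simp only [wud, h1, h2, h3, h4, hmax, habs]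
  · have h1 : rightSet X₂ X₁ b₂ b₁ = X₁ := by rw [rightSet, if_pos h]
    have h2 : rightSet X₁ X₂ b₁ b₂ = X₁ := by rw [rightSet, if_neg (by omega)]
    have h3 : leftSet X₂ X₁ b₂ b₁ = X₂ := by rw [leftSet, if_pos h]
    have h4 : leftSet X₁ X₂ b₁ b₂ = X₂ := by rw [leftSet, if_neg (by omega)]
    simp only [wud, h1, h2, h3, h4, hmax, habs]

lemma cocore_swap {e : ℤ} {Θ C : Set ℤ × Set ℤ} (h : IsCocoreOf e Θ C) :
    IsCocoreOf e (swapP Θ) (swapP C) := by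
  constructor
  · exact Relation.ReflTransGen.lift swapP (fun a b hab => removeCohook_swap hab) _ _ h.1
  · intro hc
    apply h.2
    rcases hc with ⟨x, h1, h2⟩ | ⟨x, h1, h2⟩
    · exact Or.inr ⟨x, h1, h2⟩
    · exact Or.inl ⟨x, h1, h2⟩

/-- Decomposition of an integer relative to the window `[b₁-e+1, b₁]`. -/
lemma decomp (e b₁ : ℤ) (he : 1 ≤ e) (x : ℤ) :
    ∃ i q : ℤ, 1 ≤ i ∧ i ≤ e ∧ x = b₁ - e + i + q*e := by
  set r := (x - (b₁ + 1)) % e with hr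
  set Q := (x - (b₁ + 1)) / e with hQ
  have hdiv : e * Q + r = x - (b₁ + 1) := Int.mul_ediv_add_emod _ _
  have hr0 : 0 ≤ r := Int.emod_nonneg _ (by omega)
  have hrlt : r < e := Int.emod_lt_of_pos _ (by omega)
  refine ⟨r + 1, Q + 1, by omega, by omega, ?_⟩
  have h1 : (Q + 1)*e = e*Q + e := by ring
  omega

end Stmt0Aux
namespace Stmt0Aux

section Build

variable {d e k b₁ b₂ : ℤ} {X₁ X₂ T B : Set ℤ}

/-- The bound for the indicator sum. -/
lemma indic_bounds (P Q : Prop) :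
    (0 : ℤ) ≤ (if P then (1:ℤ) else 0) + (if Q then (1:ℤ) else 0) ∧
    (if P then (1:ℤ) else 0) + (if Q then (1:ℤ) else 0) ≤ 2 := by
  constructor <;> split_ifs <;> omega

lemma build
    (hd : d = 2*e) (he : 1 ≤ e) (hk : 0 ≤ k) (hb₂ : b₂ = b₁ + (2*k+1)*e)
    (hT : ∀ i q : ℤ, 1 ≤ i → i ≤ e → (b₁ - e + i + q*e ∈ T ↔
       ((Even (q+k) ∧ q ≤ k) ∨ (Even (q+k+1) ∧ q ≤ k - 1
         + ((if b₁ - e + i ∈ X₁ then (1:ℤ) else 0)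
           + (if b₁ - e + i + (2*k+1)*e ∈ X₂ then (1:ℤ) else 0))))))
    (hB : ∀ i q : ℤ, 1 ≤ i → i ≤ e → (b₁ - e + i + q*e ∈ B ↔
       ((Even (q+k+1) ∧ q ≤ k) ∨ (Even (q+k) ∧ q ≤ k - 1
         + ((if b₁ - e + i ∈ X₁ then (1:ℤ) else 0)
           + (if b₁ - e + i + (2*k+1)*e ∈ X₂ then (1:ℤ) else 0)))))) :
    IsDSmallWith d T B (b₁ + k*e + 1) (b₁ + (k+1)*e) (b₁ + (k-1)*e + 1) (b₁ + k*e) ∧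
    middleLen d (b₁ + (k+1)*e) (b₁ + k*e) = 0 ∧
    ∀ i : ℤ, 1 ≤ i → i ≤ e →
      wud d T B (b₁ + (k+1)*e) (b₁ + k*e) i = replaceUp (wud d X₁ X₂ b₁ b₂ i) := by
  have hde : d / 2 = e := by omega
  have hke : (k+1)*e = k*e + e := by ring
  have hke' : (k-1)*e = k*e - e := by ring
  have h2ke : (2*k+1)*e = 2*(k*e) + e := by ring
  have hkenn : 0 ≤ k*e := by positivity
  have hblt : b₁ < b₂ := by omega
  -- bounds on T
  have hTsub : T ⊆ Set.Iic (b₁ + (k+1)*e) := by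
    intro x hx
    obtain ⟨i, q, hi, hie, rfl⟩ := decomp e b₁ he x
    have h := (hT i q hi hie).mp hx
    obtain ⟨hb0, hb2⟩ := indic_bounds (b₁ - e + i ∈ X₁) (b₁ - e + i + (2*k+1)*e ∈ X₂)
    have hq : q ≤ k + 1 := by
      rcases h with ⟨_, hq⟩ | ⟨_, hq⟩ <;> omega
    have hqe : q*e ≤ (k+1)*e := by nlinarith
    simp only [Set.mem_Iic]
    omega
  have hTlow : Set.Iio (b₁ + k*e + 1) ⊆ T := by
    intro x hx
    simp only [Set.mem_Iio] at hx
    obtain ⟨i, q, hi, hie, rfl⟩ := decomp e b₁ he x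
    obtain ⟨hb0, hb2⟩ := indic_bounds (b₁ - e + i ∈ X₁) (b₁ - e + i + (2*k+1)*e ∈ X₂)
    have hqk : q ≤ k := by
      by_contra hcon
      push_neg at hcon
      have : (k+1)*e ≤ q*e := by nlinarith
      omega
    apply (hT i q hi hie).mpr
    rcases Int.even_or_odd (q+k) with hev | hod
    · exact Or.inl ⟨hev, hqk⟩
    · obtain ⟨m, hm⟩ := hod
      refine Or.inr ⟨by rw [Int.even_iff]; omega, by omega⟩
  -- bounds on B
  have hBsub : B ⊆ Set.Iic (b₁ + k*e) := by
    intro x hx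
    obtain ⟨i, q, hi, hie, rfl⟩ := decomp e b₁ he x
    have h := (hB i q hi hie).mp hx
    obtain ⟨hb0, hb2⟩ := indic_bounds (b₁ - e + i ∈ X₁) (b₁ - e + i + (2*k+1)*e ∈ X₂)
    have hq : q ≤ k := by
      rcases h with ⟨_, hq⟩ | ⟨hev, hq⟩
      · omega
      · obtain ⟨m, hm⟩ := hev
        omega
    have hqe : q*e ≤ k*e := by nlinarith
    simp only [Set.mem_Iic]
    omega
  have hBlow : Set.Iio (b₁ + (k-1)*e + 1) ⊆ B := by
    intro x hx
    simp only [Set.mem_Iio] at hx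
    obtain ⟨i, q, hi, hie, rfl⟩ := decomp e b₁ he x
    obtain ⟨hb0, hb2⟩ := indic_bounds (b₁ - e + i ∈ X₁) (b₁ - e + i + (2*k+1)*e ∈ X₂)
    have hqk : q ≤ k - 1 := by
      by_contra hcon
      push_neg at hcon
      have : k*e ≤ q*e := by nlinarith
      omega
    apply (hB i q hi hie).mpr
    rcases Int.even_or_odd (q+k) with hev | hod
    · exact Or.inr ⟨hev, by omega⟩
    · obtain ⟨m, hm⟩ := hod
      exact Or.inl ⟨by rw [Int.even_iff]; omega, by omega⟩
  have hTne : T.Nonempty := ⟨b₁ + k*e, hTlow (by simp only [Set.mem_Iio]; omega)⟩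
  have hBne : B.Nonempty := ⟨b₁ + (k-1)*e, hBlow (by simp only [Set.mem_Iio]; omega)⟩
  refine ⟨⟨by omega, by omega,
    le_botB_of_subset hTlow ⟨b₁ + (k+1)*e + 1, fun z hz hc => by
      have := hTsub hc; simp only [Set.mem_Iic] at this; omega⟩,
    le_botB_of_subset hBlow ⟨b₁ + k*e + 1, fun z hz hc => by
      have := hBsub hc; simp only [Set.mem_Iic] at this; omega⟩,
    topB_le_of_subset hTne hTsub,
    topB_le_of_subset hBne hBsub,
    ⟨-1, by rw [hde]; omega⟩⟩, ?_, ?_⟩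
  · rw [middleLen, hde]
    have : b₁ + k*e - (b₁ + (k+1)*e) = -e := by ring
    rw [this, abs_neg, abs_of_nonneg (by omega)]
    omega
  · intro i h1 h2
    -- Letter membership facts
    have hTmem := hT i (k+1) h1 h2
    have hBmem := hB i k h1 h2
    -- position rewrites for the cocore symbol
    have hposR : max (b₁+(k+1)*e) (b₁+k*e) = b₁+(k+1)*e := max_eq_left (by omega)
    have habs : |b₁ + k*e - (b₁ + (k+1)*e)| = e := by
      have : b₁ + k*e - (b₁ + (k+1)*e) = -e := by ring
      rw [this, abs_neg, abs_of_nonneg (by omega)]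
    have hR : rightSet T B (b₁+(k+1)*e) (b₁+k*e) = T := by
      rw [rightSet, if_neg (by omega)]
    have hL : leftSet T B (b₁+(k+1)*e) (b₁+k*e) = B := by
      rw [leftSet, if_neg (by omega)]
    have e2 : max (b₁+(k+1)*e) (b₁+k*e) - d / 2 + i - |b₁ + k*e - (b₁ + (k+1)*e)|
        = b₁ - e + i + k*e := by rw [hposR, hde, habs]; ring
    have e1 : max (b₁+(k+1)*e) (b₁+k*e) - d / 2 + i = b₁ - e + i + (k+1)*e := by
      rw [hposR, hde]; ring
    -- position rewrites for the original symbol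
    have hposR' : max b₁ b₂ = b₂ := max_eq_right (by omega)
    have habs' : |b₂ - b₁| = (2*k+1)*e := by
      rw [hb₂]
      have : b₁ + (2*k+1)*e - b₁ = (2*k+1)*e := by ring
      rw [this, abs_of_nonneg (by omega)]
    have hR' : rightSet X₁ X₂ b₁ b₂ = X₂ := by rw [rightSet, if_pos hblt]
    have hL' : leftSet X₁ X₂ b₁ b₂ = X₁ := by rw [leftSet, if_pos hblt]
    have f2 : max b₁ b₂ - d / 2 + i - |b₂ - b₁| = b₁ - e + i := by
      rw [hposR', hde, habs', hb₂]; ring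
    have f1 : max b₁ b₂ - d / 2 + i = b₁ - e + i + (2*k+1)*e := by
      rw [hposR', hde, hb₂]; ring
    rw [wud, wud, hR, hL, hR', hL', e2, e1, f2, f1]
    -- parity facts
    have hoddT : ¬ Even ((k+1)+k) := by rw [Int.even_iff]; omega
    have hevT : Even ((k+1)+k+1) := by rw [Int.even_iff]; omega
    have hevB : Even (k+k) := ⟨k, rfl⟩
    have hoddB : ¬ Even (k+k+1) := by rw [Int.even_iff]; omega
    by_cases hx1 : b₁ - e + i ∈ X₁ <;> by_cases hx2 : b₁ - e + i + (2*k+1)*e ∈ X₂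
    · have hmT : b₁ - e + i + (k+1)*e ∈ T :=
        hTmem.mpr (Or.inr ⟨hevT, by rw [if_pos hx1, if_pos hx2]; omega⟩)
      have hmB : b₁ - e + i + k*e ∈ B :=
        hBmem.mpr (Or.inr ⟨hevB, by rw [if_pos hx1, if_pos hx2]; omega⟩)
      rw [if_pos hmT, if_pos hmB, if_pos hx2, if_pos hx1]
      rfl
    · have hmT : b₁ - e + i + (k+1)*e ∉ T := by
        intro hc
        rcases hTmem.mp hc with ⟨hev, _⟩ | ⟨_, hle⟩
        · exact hoddT hev
        · rw [if_pos hx1, if_neg hx2] at hle; omega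
      have hmB : b₁ - e + i + k*e ∈ B :=
        hBmem.mpr (Or.inr ⟨hevB, by rw [if_pos hx1, if_neg hx2]; omega⟩)
      rw [if_neg hmT, if_pos hmB, if_neg hx2, if_pos hx1]
      rfl
    · have hmT : b₁ - e + i + (k+1)*e ∉ T := by
        intro hc
        rcases hTmem.mp hc with ⟨hev, _⟩ | ⟨_, hle⟩
        · exact hoddT hev
        · rw [if_neg hx1, if_pos hx2] at hle; omega
      have hmB : b₁ - e + i + k*e ∈ B :=
        hBmem.mpr (Or.inr ⟨hevB, by rw [if_neg hx1, if_pos hx2]; omega⟩)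
      rw [if_neg hmT, if_pos hmB, if_pos hx2, if_neg hx1]
      rfl
    · have hmT : b₁ - e + i + (k+1)*e ∉ T := by
        intro hc
        rcases hTmem.mp hc with ⟨hev, _⟩ | ⟨_, hle⟩
        · exact hoddT hev
        · rw [if_neg hx1, if_neg hx2] at hle; omega
      have hmB : b₁ - e + i + k*e ∉ B := by
        intro hc
        rcases hBmem.mp hc with ⟨hev, _⟩ | ⟨_, hle⟩
        · exact hoddB hev
        · rw [if_neg hx1, if_neg hx2] at hle; omega
      rw [if_neg hmT, if_neg hmB, if_neg hx2, if_neg hx1]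
      rfl

end Build

end Stmt0Aux
namespace Stmt0Aux

lemma middleLen_comm (d x y : ℤ) : middleLen d x y = middleLen d y x := by
  rw [middleLen, middleLen, abs_sub_comm]

lemma main_lt (d : ℤ) (hd : 2 ≤ d) (hdE : Even d)
    (X₁ X₂ C₁ C₂ : Set ℤ) (hX₁ : IsBetaSet X₁) (hX₂ : IsBetaSet X₂)
    (a₁ b₁ a₂ b₂ : ℤ) (hsm : IsDSmallWith d X₁ X₂ a₁ b₁ a₂ b₂) (hlt : b₁ < b₂)
    (hcocore : IsCocoreOf (d / 2) (X₁, X₂) (C₁, C₂)) :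
    ∃ a₁' b₁' a₂' b₂' : ℤ, IsDSmallWith d C₁ C₂ a₁' b₁' a₂' b₂' ∧
      middleLen d b₁' b₂' = 0 ∧
      ∀ i : ℤ, 1 ≤ i → i ≤ d / 2 →
        wud d C₁ C₂ b₁' b₂' i = replaceUp (wud d X₁ X₂ b₁ b₂ i) := by
  obtain ⟨r, hr⟩ := hdE
  set e := d / 2 with he0
  have he2 : d = 2*e := by omega
  have he1 : 1 ≤ e := by omega
  -- interval facts for the original symbol
  have hIo1 : Set.Iio (b₁ - e + 1) ⊆ X₁ := by
    have h := subset_of_le_botB hX₁ hsm.bot₁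
    have hh : b₁ - e + 1 = a₁ := by have := hsm.len₁; omega
    rwa [hh]
  have hIc1 : X₁ ⊆ Set.Iic b₁ := subset_Iic_of_topB hX₁ hsm.top₁
  -- the middle region parameter k
  obtain ⟨k, hkk⟩ := hsm.cong
  have hk0 : 0 ≤ k := by
    by_contra hcon
    push_neg at hcon
    have h1 : k ≤ -1 := by omega
    have h2 : d*k ≤ d*(-1) := by nlinarith
    have h3 : d*(-1) = -d := by ring
    omega
  have hb₂ : b₂ = b₁ + (2*k+1)*e := by
    have h1 : (2*k+1)*e = 2*e*k + e := by ring
    have h2 : d*k = 2*e*k := by rw [he2]; try ring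
    omega
  have hIo2 : Set.Iio (b₁ + (2*k+1)*e - e + 1) ⊆ X₂ := by
    have h := subset_of_le_botB hX₂ hsm.bot₂
    have hh : b₁ + (2*k+1)*e - e + 1 = a₂ := by have := hsm.len₂; omega
    rwa [hh]
  have hIc2 : X₂ ⊆ Set.Iic (b₁ + (2*k+1)*e) := by
    rw [← hb₂]
    exact subset_Iic_of_topB hX₂ hsm.top₂
  -- cocore machinery
  have hβX : Bpair (X₁, X₂) := ⟨hX₁, hX₂⟩
  have hβC : Bpair (C₁, C₂) := bpair_rtg hcocore.1 hβX
  have hdich := chg_rtg he1 hcocore.1 hβX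
  have hmem1 : ∀ x, x ∈ C₁ ↔ 0 ≤ chg e (C₁, C₂) x :=
    fun x => cocore_mem_fst he1 hβC hcocore.2 x
  have hmem2 : ∀ x, x ∈ C₂ ↔ -1 ≤ chg e (C₁, C₂) (x + e) :=
    fun x => cocore_mem_snd he1 hβC hcocore.2 x
  have hchg := chg_theta he1 hk0 hIo1 hIc1 hIo2 hIc2
  have hswap : ∀ v, chg e (swapP (X₁, X₂)) v = chg e (X₁, X₂) (v - e) - 1 :=
    fun v => chg_swap he1 hβX v
  -- the two membership patterns
  have hforms :
      ((∀ i q : ℤ, 1 ≤ i → i ≤ e → (b₁ - e + i + q*e ∈ C₁ ↔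
         ((Even (q+k) ∧ q ≤ k) ∨ (Even (q+k+1) ∧ q ≤ k - 1
           + ((if b₁ - e + i ∈ X₁ then (1:ℤ) else 0)
             + (if b₁ - e + i + (2*k+1)*e ∈ X₂ then (1:ℤ) else 0)))))) ∧
       (∀ i q : ℤ, 1 ≤ i → i ≤ e → (b₁ - e + i + q*e ∈ C₂ ↔
         ((Even (q+k+1) ∧ q ≤ k) ∨ (Even (q+k) ∧ q ≤ k - 1
           + ((if b₁ - e + i ∈ X₁ then (1:ℤ) else 0)
             + (if b₁ - e + i + (2*k+1)*e ∈ X₂ then (1:ℤ) else 0))))))) ∨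
      ((∀ i q : ℤ, 1 ≤ i → i ≤ e → (b₁ - e + i + q*e ∈ C₂ ↔
         ((Even (q+k) ∧ q ≤ k) ∨ (Even (q+k+1) ∧ q ≤ k - 1
           + ((if b₁ - e + i ∈ X₁ then (1:ℤ) else 0)
             + (if b₁ - e + i + (2*k+1)*e ∈ X₂ then (1:ℤ) else 0)))))) ∧
       (∀ i q : ℤ, 1 ≤ i → i ≤ e → (b₁ - e + i + q*e ∈ C₁ ↔
         ((Even (q+k+1) ∧ q ≤ k) ∨ (Even (q+k) ∧ q ≤ k - 1
           + ((if b₁ - e + i ∈ X₁ then (1:ℤ) else 0)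
             + (if b₁ - e + i + (2*k+1)*e ∈ X₂ then (1:ℤ) else 0))))))) := by
    rcases hdich with hOr | hOr
    · -- orientation A : C₁ gets the "Even q" pattern, C₂ the "Odd q" pattern
      have hC1A : ∀ i q : ℤ, 1 ≤ i → i ≤ e → (b₁ - e + i + q*e ∈ C₁ ↔
          0 ≤ k - 1 + (if Even q then
            ((if b₁ - e + i ∈ X₁ then (1:ℤ) else 0)
              + (if b₁ - e + i + (2*k+1)*e ∈ X₂ then (1:ℤ) else 0)) else 1) - q) := by
        intro i q hi hie
        rw [hmem1, hOr, hchg i q hi hie]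
      have hC2A : ∀ i q : ℤ, 1 ≤ i → i ≤ e → (b₁ - e + i + q*e ∈ C₂ ↔
          -1 ≤ k - 1 + (if Even (q+1) then
            ((if b₁ - e + i ∈ X₁ then (1:ℤ) else 0)
              + (if b₁ - e + i + (2*k+1)*e ∈ X₂ then (1:ℤ) else 0)) else 1) - (q+1)) := by
        intro i q hi hie
        have harg : b₁ - e + i + q*e + e = b₁ - e + i + (q+1)*e := by ring
        rw [hmem2, hOr, harg, hchg i (q+1) hi hie]
      rcases Int.even_or_odd k with hkp | hkp
      · -- k even : C₁ has the "B" pattern, C₂ the "T" pattern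
        obtain ⟨mk, hmk⟩ := hkp
        refine Or.inr ⟨?_, ?_⟩
        · intro i q hi hie
          rw [hC2A i q hi hie]
          obtain ⟨hn0, hn2⟩ := indic_bounds (b₁ - e + i ∈ X₁) (b₁ - e + i + (2*k+1)*e ∈ X₂)
          set n := (if b₁ - e + i ∈ X₁ then (1:ℤ) else 0)
            + (if b₁ - e + i + (2*k+1)*e ∈ X₂ then (1:ℤ) else 0) with hndef
          rcases Int.even_or_odd q with ⟨mq, hmq⟩ | ⟨mq, hmq⟩
          · rw [if_neg (show ¬ Even (q+1) by rw [Int.even_iff]; omega)]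
            simp only [Int.even_iff]
            omega
          · rw [if_pos (show Even (q+1) by rw [Int.even_iff]; omega)]
            simp only [Int.even_iff]
            omega
        · intro i q hi hie
          rw [hC1A i q hi hie]
          obtain ⟨hn0, hn2⟩ := indic_bounds (b₁ - e + i ∈ X₁) (b₁ - e + i + (2*k+1)*e ∈ X₂)
          set n := (if b₁ - e + i ∈ X₁ then (1:ℤ) else 0)
            + (if b₁ - e + i + (2*k+1)*e ∈ X₂ then (1:ℤ) else 0) with hndef
          rcases Int.even_or_odd q with ⟨mq, hmq⟩ | ⟨mq, hmq⟩
          · rw [if_pos (show Even q from ⟨mq, by omega⟩)]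
            simp only [Int.even_iff]
            omega
          · rw [if_neg (show ¬ Even q by rw [Int.even_iff]; omega)]
            simp only [Int.even_iff]
            omega
      · -- k odd : C₁ has the "T" pattern, C₂ the "B" pattern
        obtain ⟨mk, hmk⟩ := hkp
        refine Or.inl ⟨?_, ?_⟩
        · intro i q hi hie
          rw [hC1A i q hi hie]
          obtain ⟨hn0, hn2⟩ := indic_bounds (b₁ - e + i ∈ X₁) (b₁ - e + i + (2*k+1)*e ∈ X₂)
          set n := (if b₁ - e + i ∈ X₁ then (1:ℤ) else 0)
            + (if b₁ - e + i + (2*k+1)*e ∈ X₂ then (1:ℤ) else 0) with hndef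
          rcases Int.even_or_odd q with ⟨mq, hmq⟩ | ⟨mq, hmq⟩
          · rw [if_pos (show Even q from ⟨mq, by omega⟩)]
            simp only [Int.even_iff]
            omega
          · rw [if_neg (show ¬ Even q by rw [Int.even_iff]; omega)]
            simp only [Int.even_iff]
            omega
        · intro i q hi hie
          rw [hC2A i q hi hie]
          obtain ⟨hn0, hn2⟩ := indic_bounds (b₁ - e + i ∈ X₁) (b₁ - e + i + (2*k+1)*e ∈ X₂)
          set n := (if b₁ - e + i ∈ X₁ then (1:ℤ) else 0)
            + (if b₁ - e + i + (2*k+1)*e ∈ X₂ then (1:ℤ) else 0) with hndef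
          rcases Int.even_or_odd q with ⟨mq, hmq⟩ | ⟨mq, hmq⟩
          · rw [if_neg (show ¬ Even (q+1) by rw [Int.even_iff]; omega)]
            simp only [Int.even_iff]
            omega
          · rw [if_pos (show Even (q+1) by rw [Int.even_iff]; omega)]
            simp only [Int.even_iff]
            omega
    · -- orientation B : C₁ gets the "Odd q" pattern, C₂ the "Even q" pattern
      have hC1B : ∀ i q : ℤ, 1 ≤ i → i ≤ e → (b₁ - e + i + q*e ∈ C₁ ↔
          0 ≤ k - 1 + (if Even (q-1) then
            ((if b₁ - e + i ∈ X₁ then (1:ℤ) else 0)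
              + (if b₁ - e + i + (2*k+1)*e ∈ X₂ then (1:ℤ) else 0)) else 1) - (q-1) - 1) := by
        intro i q hi hie
        have harg : b₁ - e + i + q*e - e = b₁ - e + i + (q-1)*e := by ring
        rw [hmem1, hOr, hswap, harg, hchg i (q-1) hi hie]
      have hC2B : ∀ i q : ℤ, 1 ≤ i → i ≤ e → (b₁ - e + i + q*e ∈ C₂ ↔
          -1 ≤ k - 1 + (if Even q then
            ((if b₁ - e + i ∈ X₁ then (1:ℤ) else 0)
              + (if b₁ - e + i + (2*k+1)*e ∈ X₂ then (1:ℤ) else 0)) else 1) - q - 1) := by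
        intro i q hi hie
        have harg : b₁ - e + i + q*e + e - e = b₁ - e + i + q*e := by ring
        rw [hmem2, hOr, hswap, harg, hchg i q hi hie]
      rcases Int.even_or_odd k with hkp | hkp
      · -- k even : C₂ has the "B" pattern? C₂ has Even-q pattern shifted: C₂ ↔ orientation-A C₁
        obtain ⟨mk, hmk⟩ := hkp
        refine Or.inl ⟨?_, ?_⟩
        · intro i q hi hie
          rw [hC1B i q hi hie]
          obtain ⟨hn0, hn2⟩ := indic_bounds (b₁ - e + i ∈ X₁) (b₁ - e + i + (2*k+1)*e ∈ X₂)
          set n := (if b₁ - e + i ∈ X₁ then (1:ℤ) else 0)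
            + (if b₁ - e + i + (2*k+1)*e ∈ X₂ then (1:ℤ) else 0) with hndef
          rcases Int.even_or_odd q with ⟨mq, hmq⟩ | ⟨mq, hmq⟩
          · rw [if_neg (show ¬ Even (q-1) by rw [Int.even_iff]; omega)]
            simp only [Int.even_iff]
            omega
          · rw [if_pos (show Even (q-1) by rw [Int.even_iff]; omega)]
            simp only [Int.even_iff]
            omega
        · intro i q hi hie
          rw [hC2B i q hi hie]
          obtain ⟨hn0, hn2⟩ := indic_bounds (b₁ - e + i ∈ X₁) (b₁ - e + i + (2*k+1)*e ∈ X₂)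
          set n := (if b₁ - e + i ∈ X₁ then (1:ℤ) else 0)
            + (if b₁ - e + i + (2*k+1)*e ∈ X₂ then (1:ℤ) else 0) with hndef
          rcases Int.even_or_odd q with ⟨mq, hmq⟩ | ⟨mq, hmq⟩
          · rw [if_pos (show Even q from ⟨mq, by omega⟩)]
            simp only [Int.even_iff]
            omega
          · rw [if_neg (show ¬ Even q by rw [Int.even_iff]; omega)]
            simp only [Int.even_iff]
            omega
      · -- k odd
        obtain ⟨mk, hmk⟩ := hkp
        refine Or.inr ⟨?_, ?_⟩
        · intro i q hi hie
          rw [hC2B i q hi hie]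
          obtain ⟨hn0, hn2⟩ := indic_bounds (b₁ - e + i ∈ X₁) (b₁ - e + i + (2*k+1)*e ∈ X₂)
          set n := (if b₁ - e + i ∈ X₁ then (1:ℤ) else 0)
            + (if b₁ - e + i + (2*k+1)*e ∈ X₂ then (1:ℤ) else 0) with hndef
          rcases Int.even_or_odd q with ⟨mq, hmq⟩ | ⟨mq, hmq⟩
          · rw [if_pos (show Even q from ⟨mq, by omega⟩)]
            simp only [Int.even_iff]
            omega
          · rw [if_neg (show ¬ Even q by rw [Int.even_iff]; omega)]
            simp only [Int.even_iff]
            omega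
        · intro i q hi hie
          rw [hC1B i q hi hie]
          obtain ⟨hn0, hn2⟩ := indic_bounds (b₁ - e + i ∈ X₁) (b₁ - e + i + (2*k+1)*e ∈ X₂)
          set n := (if b₁ - e + i ∈ X₁ then (1:ℤ) else 0)
            + (if b₁ - e + i + (2*k+1)*e ∈ X₂ then (1:ℤ) else 0) with hndef
          rcases Int.even_or_odd q with ⟨mq, hmq⟩ | ⟨mq, hmq⟩
          · rw [if_neg (show ¬ Even (q-1) by rw [Int.even_iff]; omega)]
            simp only [Int.even_iff]
            omega
          · rw [if_pos (show Even (q-1) by rw [Int.even_iff]; omega)]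
            simp only [Int.even_iff]
            omega
  -- assemble
  have hne : (b₁ + (k+1)*e : ℤ) ≠ b₁ + k*e := by
    have : (k+1)*e = k*e + e := by ring
    omega
  rcases hforms with ⟨hTf, hBf⟩ | ⟨hTf, hBf⟩
  · obtain ⟨hsmall, hmid, hwud⟩ := build he2 he1 hk0 hb₂ hTf hBf
    exact ⟨b₁ + k*e + 1, b₁ + (k+1)*e, b₁ + (k-1)*e + 1, b₁ + k*e, hsmall, hmid,
      fun i h1 h2 => hwud i h1 h2⟩
  · obtain ⟨hsmall, hmid, hwud⟩ := build he2 he1 hk0 hb₂ hTf hBf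
    refine ⟨b₁ + (k-1)*e + 1, b₁ + k*e, b₁ + k*e + 1, b₁ + (k+1)*e,
      isDSmallWith_swap ⟨r, hr⟩ hsmall, ?_, ?_⟩
    · rw [middleLen_comm]
      exact hmid
    · intro i h1 h2
      rw [wud_swap d C₂ C₁ hne i]
      exact hwud i h1 h2
  
end Stmt0Aux

/-- If `Θ = (X₁,X₂)` is a `d`-small symbol and `Θ° = (C₁,C₂)` is a
`d/2`-cocore of `Θ`, then `Θ°` is `d`-small with defining intervals of middle region
cardinality `0`, and for a suitable choice of such intervals the up-down diagram of
`Θ°` is obtained from that of `Θ` by replacing every `∧` by `∨`. -/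
theorem stmt0 (d : ℤ) (hd : 2 ≤ d) (hdE : Even d)
    (X₁ X₂ C₁ C₂ : Set ℤ) (hX₁ : IsBetaSet X₁) (hX₂ : IsBetaSet X₂)
    (a₁ b₁ a₂ b₂ : ℤ) (hsm : IsDSmallWith d X₁ X₂ a₁ b₁ a₂ b₂)
    (hcocore : IsCocoreOf (d / 2) (X₁, X₂) (C₁, C₂)) :
    ∃ a₁' b₁' a₂' b₂' : ℤ, IsDSmallWith d C₁ C₂ a₁' b₁' a₂' b₂' ∧
      middleLen d b₁' b₂' = 0 ∧
      ∀ i : ℤ, 1 ≤ i → i ≤ d / 2 →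
        wud d C₁ C₂ b₁' b₂' i = replaceUp (wud d X₁ X₂ b₁ b₂ i) := by
  rcases (Stmt0Aux.dsmall_b_ne hd hdE hsm).lt_or_gt with hlt | hlt
  · exact Stmt0Aux.main_lt d hd hdE X₁ X₂ C₁ C₂ hX₁ hX₂ a₁ b₁ a₂ b₂ hsm hlt hcocore
  · obtain ⟨A₁, B₁, A₂, B₂, hsm', hmid, hw⟩ :=
      Stmt0Aux.main_lt d hd hdE X₂ X₁ C₂ C₁ hX₂ hX₁ a₂ b₂ a₁ b₁
        (Stmt0Aux.isDSmallWith_swap hdE hsm) hlt (Stmt0Aux.cocore_swap hcocore)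
    refine ⟨A₂, B₂, A₁, B₁, Stmt0Aux.isDSmallWith_swap hdE hsm', ?_, ?_⟩
    · rw [Stmt0Aux.middleLen_comm]
      exact hmid
    · intro i h1 h2
      rw [Stmt0Aux.wud_swap d C₂ C₁ (Stmt0Aux.dsmall_b_ne hd hdE hsm') i, hw i h1 h2,
        Stmt0Aux.wud_swap d X₁ X₂ (Stmt0Aux.dsmall_b_ne hd hdE hsm) i]
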